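/- Let r(k,k') = 4 sin(πk) sin(π(k−k')) sin(π(2k−k')) and define the symmetrized scattering kernel R(k,k') := ½[ r(k, k−k')² + r(k, k+k')² ] for k, k' ∈ 𝕋. Then for all k, k' ∈ 𝕋: (i) R(k,k') = 16 sin²(πk) sin²(πk') [ sin²(πk) cos²(πk') + sin²(πk') cos²(πk) ]; (ii) R(k,k') = R(k',k); and (iii) ∫_𝕋 R(k,k') dk' = sin²(2πk) + 2 sin²(πk). -/
import Mathlib


open MeasureTheory Set Real

noncomputable section

/-- The unit torus `𝕋`, modeled as the interval `(-1/2, 1/2]` with Lebesgue measure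
(total mass `1`). -/
def torusK : Set ℝ := Ioc (-(1:ℝ)/2) (1/2)

/-- The scattering amplitude `r(k,k') = 4 sin(πk) sin(π(k−k')) sin(π(2k−k'))`. -/
def rscat (k k' : ℝ) : ℝ :=
  4 * Real.sin (π * k) * Real.sin (π * (k - k')) * Real.sin (π * (2 * k - k'))

/-- The symmetrized scattering kernel `R(k,k') = ½[r(k,k−k')² + r(k,k+k')²]`. -/
def Rker (k k' : ℝ) : ℝ := ((rscat k (k - k')) ^ 2 + (rscat k (k + k')) ^ 2) / 2

lemma Rker_formula (k k' : ℝ) : Rker k k'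
    = 16 * Real.sin (π * k) ^ 2 * Real.sin (π * k') ^ 2 *
        (Real.sin (π * k) ^ 2 * Real.cos (π * k') ^ 2
          + Real.sin (π * k') ^ 2 * Real.cos (π * k) ^ 2) := by
  have h1 : rscat k (k - k')
      = 4 * Real.sin (π * k) * Real.sin (π * k') * Real.sin (π * k + π * k') := by
    unfold rscat
    rw [show π * (k - (k - k')) = π * k' by ring,
        show π * (2 * k - (k - k')) = π * k + π * k' by ring]
  have h2 : rscat k (k + k')
      = 4 * Real.sin (π * k) * Real.sin (-(π * k')) * Real.sin (π * k - π * k') := by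
    unfold rscat
    rw [show π * (k - (k + k')) = -(π * k') by ring,
        show π * (2 * k - (k + k')) = π * k - π * k' by ring]
  unfold Rker
  rw [h1, h2, Real.sin_add, Real.sin_sub, Real.sin_neg]
  ring

lemma integral_cos_mul' (c a b : ℝ) (hc : c ≠ 0) :
    ∫ x in a..b, Real.cos (c * x) = (Real.sin (c * b) - Real.sin (c * a)) / c := by
  rw [intervalIntegral.integral_comp_mul_left (fun x => Real.cos x) hc,
      integral_cos, smul_eq_mul]
  field_simp

lemma int_sin_sq_cos_sq :
    ∫ x in torusK, Real.sin (π * x) ^ 2 * Real.cos (π * x) ^ 2 = 1 / 8 := by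
  have hle : (-(1:ℝ)/2) ≤ 1/2 := by norm_num
  rw [show torusK = Ioc (-(1:ℝ)/2) (1/2) from rfl,
      ← intervalIntegral.integral_of_le hle]
  have hpt : (fun x : ℝ => Real.sin (π * x) ^ 2 * Real.cos (π * x) ^ 2)
      = fun x : ℝ => 1/8 - (1/8) * Real.cos (4 * π * x) := by
    funext x
    have h4 : Real.cos (4 * π * x) = 2 * Real.cos (2 * (π * x)) ^ 2 - 1 := by
      rw [show 4 * π * x = 2 * (2 * (π * x)) by ring, Real.cos_two_mul]
    rw [h4, Real.cos_two_mul]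
    have hp := Real.sin_sq_add_cos_sq (π * x)
    nlinarith [hp]
  rw [hpt, intervalIntegral.integral_sub (by simp [intervalIntegrable_const])
      (by apply Continuous.intervalIntegrable; continuity),
    intervalIntegral.integral_const, intervalIntegral.integral_const_mul,
    integral_cos_mul' (4 * π) _ _ (by positivity)]
  have h1 : (4 * π) * (1/2 : ℝ) = 2 * π := by ring
  have h2 : (4 * π) * (-(1:ℝ)/2) = -(2 * π) := by ring
  rw [h1, h2, Real.sin_neg]
  simp [Real.sin_two_pi]
  norm_num

lemma int_sin_pow_four :
    ∫ x in torusK, Real.sin (π * x) ^ 4 = 3 / 8 := by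
  have hle : (-(1:ℝ)/2) ≤ 1/2 := by norm_num
  rw [show torusK = Ioc (-(1:ℝ)/2) (1/2) from rfl,
      ← intervalIntegral.integral_of_le hle]
  have hpt : (fun x : ℝ => Real.sin (π * x) ^ 4)
      = fun x : ℝ => 3/8 - (1/2) * Real.cos (2 * π * x) + (1/8) * Real.cos (4 * π * x) := by
    funext x
    have h4 : Real.cos (4 * π * x) = 2 * Real.cos (2 * (π * x)) ^ 2 - 1 := by
      rw [show 4 * π * x = 2 * (2 * (π * x)) by ring, Real.cos_two_mul]
    have h2' : Real.cos (2 * π * x) = Real.cos (2 * (π * x)) := by ring_nf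
    rw [h4, h2', Real.cos_two_mul]
    have hp := Real.sin_sq_add_cos_sq (π * x)
    nlinarith [hp]
  rw [hpt]
  have i2 : IntervalIntegrable (fun x : ℝ => (1/2) * Real.cos (2 * π * x)) volume
      (-(1:ℝ)/2) (1/2) := by apply Continuous.intervalIntegrable; continuity
  have i4 : IntervalIntegrable (fun x : ℝ => (1/8) * Real.cos (4 * π * x)) volume
      (-(1:ℝ)/2) (1/2) := by apply Continuous.intervalIntegrable; continuity
  rw [intervalIntegral.integral_add (by exact (intervalIntegrable_const).sub i2) i4,
      intervalIntegral.integral_sub intervalIntegrable_const i2,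
      intervalIntegral.integral_const, intervalIntegral.integral_const_mul,
      intervalIntegral.integral_const_mul,
      integral_cos_mul' (2 * π) _ _ (by positivity),
      integral_cos_mul' (4 * π) _ _ (by positivity)]
  have e1 : (2 * π) * (1/2 : ℝ) = π := by ring
  have e2 : (2 * π) * (-(1:ℝ)/2) = -π := by ring
  have e3 : (4 * π) * (1/2 : ℝ) = 2 * π := by ring
  have e4 : (4 * π) * (-(1:ℝ)/2) = -(2 * π) := by ring
  rw [e1, e2, e3, e4, Real.sin_neg, Real.sin_neg]
  simp [Real.sin_two_pi, Real.sin_pi]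
  norm_num

/-- Properties of the symmetrized scattering kernel: the explicit
product formula, symmetry, and the value of the total scattering kernel. -/
theorem symmetrized_scattering_kernel :
    (∀ k k' : ℝ, Rker k k'
        = 16 * Real.sin (π * k) ^ 2 * Real.sin (π * k') ^ 2 *
            (Real.sin (π * k) ^ 2 * Real.cos (π * k') ^ 2
              + Real.sin (π * k') ^ 2 * Real.cos (π * k) ^ 2)) ∧
    (∀ k k' : ℝ, Rker k k' = Rker k' k) ∧
    (∀ k : ℝ, ∫ k' in torusK, Rker k k'
        = Real.sin (2 * π * k) ^ 2 + 2 * Real.sin (π * k) ^ 2) := by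
  refine ⟨Rker_formula, ?_, ?_⟩
  · intro k k'
    rw [Rker_formula, Rker_formula]
    ring
  · intro k
    set s := Real.sin (π * k) with hs
    set c := Real.cos (π * k) with hc
    have hfun : (fun k' : ℝ => Rker k k')
        = fun k' : ℝ => (16 * s ^ 4) * (Real.sin (π * k') ^ 2 * Real.cos (π * k') ^ 2)
            + (16 * s ^ 2 * c ^ 2) * (Real.sin (π * k') ^ 4) := by
      funext k'
      rw [Rker_formula]
      ring
    have if1 : IntegrableOn
        (fun k' : ℝ => (16 * s ^ 4) * (Real.sin (π * k') ^ 2 * Real.cos (π * k') ^ 2))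
        torusK volume := by
      apply Continuous.integrableOn_Ioc; continuity
    have if2 : IntegrableOn
        (fun k' : ℝ => (16 * s ^ 2 * c ^ 2) * (Real.sin (π * k') ^ 4))
        torusK volume := by
      apply Continuous.integrableOn_Ioc; continuity
    rw [hfun, integral_add if1 if2, integral_const_mul, integral_const_mul,
        int_sin_sq_cos_sq, int_sin_pow_four]
    have hsc : Real.sin (2 * π * k) = 2 * s * c := by
      rw [show 2 * π * k = 2 * (π * k) by ring, Real.sin_two_mul]
    have hp : s ^ 2 + c ^ 2 = 1 := Real.sin_sq_add_cos_sq (π * k)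
    rw [hsc]
    nlinarith [hp]
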